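/- Let m ≥ 1 and let a, b_1, ..., b_m, x_0, ..., x_m be pairwise distinct complex numbers. Form the (m+1)×(m+1) matrix A with first row A_{0,q} = 1 for all q, and A_{p,q} = (b_p − a)/(x_q − b_p) for 1 ≤ p ≤ m, 0 ≤ q ≤ m. Then det A ≠ 0. -/

import Mathlib

open Polynomial Finset

private lemma aux_natDegree_prod_X_sub_C {ι : Type*} (s : Finset ι) (f : ι → ℂ) :
    (∏ i ∈ s, (X - C (f i))).natDegree = s.card := by
  rw [Polynomial.natDegree_prod_of_monic _ _ (fun i _ => monic_X_sub_C _)]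
  simp

/-- STATEMENT 12 (bordered Cauchy-matrix nonvanishing, Appendix B.5): for `m ≥ 1` and
pairwise distinct complex numbers `a, b_1, ..., b_m, x_0, ..., x_m`, the `(m+1)×(m+1)`
matrix with first row all `1`'s and entries `(b_p − a)/(x_q − b_p)` in row `p ≥ 1`,
column `q`, has nonzero determinant. The numbers `b_1, ..., b_m` are realized as
`b 1, ..., b m` for `b : ℕ → ℂ`, and `x_0, ..., x_m` as `x 0, ..., x m`. -/
theorem bordered_cauchy_det_ne_zero (m : ℕ) (hm : 1 ≤ m) (a : ℂ) (b x : ℕ → ℂ)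
    (hx : ∀ i j, i ≤ m → j ≤ m → i ≠ j → x i ≠ x j)
    (hb : ∀ i j, 1 ≤ i → i ≤ m → 1 ≤ j → j ≤ m → i ≠ j → b i ≠ b j)
    (hab : ∀ i, 1 ≤ i → i ≤ m → a ≠ b i)
    (hax : ∀ i, i ≤ m → a ≠ x i)
    (hbx : ∀ i j, 1 ≤ i → i ≤ m → j ≤ m → b i ≠ x j) :
    (Matrix.of fun p q : Fin (m + 1) =>
        if p = 0 then 1 else (b (p : ℕ) - a) / (x (q : ℕ) - b (p : ℕ))).det ≠ 0 := by
  classical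
  set M : Matrix (Fin (m + 1)) (Fin (m + 1)) ℂ :=
    Matrix.of fun p q : Fin (m + 1) =>
      if p = 0 then 1 else (b (p : ℕ) - a) / (x (q : ℕ) - b (p : ℕ)) with hM
  intro hdet
  obtain ⟨v, hv0, hv⟩ := Matrix.exists_vecMul_eq_zero_iff.mpr hdet
  set S : Finset (Fin (m + 1)) := Finset.univ.erase 0 with hS
  -- basic facts about members of S
  have hmem : ∀ p : Fin (m + 1), p ∈ S → 1 ≤ (p : ℕ) ∧ (p : ℕ) ≤ m := by
    intro p hp
    have hp0 : p ≠ 0 := (Finset.mem_erase.mp hp).1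
    constructor
    · exact Nat.one_le_iff_ne_zero.mpr (fun h => hp0 (Fin.ext h))
    · exact Nat.lt_succ_iff.mp p.isLt
  -- the polynomials
  set Q : Polynomial ℂ := ∏ p ∈ S, (X - C (b (p : ℕ))) with hQ
  set P : Polynomial ℂ :=
    C (v 0) * Q + ∑ p ∈ S, C (v p * (b (p : ℕ) - a)) *
      ∏ p' ∈ S.erase p, (X - C (b (p' : ℕ))) with hP
  have hScard : S.card = m := by
    simp [hS, Finset.card_erase_of_mem]
  -- P vanishes at each x q
  have heval : ∀ q : Fin (m + 1), P.eval (x (q : ℕ)) = 0 := by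
    intro q
    have hq := congrFun hv q
    have hrel : v 0 + ∑ p ∈ S, v p * ((b (p : ℕ) - a) / (x (q : ℕ) - b (p : ℕ))) = 0 := by
      have h0 : ∑ p : Fin (m + 1), v p * M p q = 0 := by
        simpa [Matrix.vecMul, dotProduct] using hq
      rw [← Finset.sum_erase_add _ _ (Finset.mem_univ 0)] at h0
      have hsc : ∑ p ∈ Finset.univ.erase (0 : Fin (m+1)), v p * M p q =
          ∑ p ∈ S, v p * ((b (p : ℕ) - a) / (x (q : ℕ) - b (p : ℕ))) := by
        refine Finset.sum_congr rfl ?_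
        intro p hp
        have hp0 : p ≠ 0 := (Finset.mem_erase.mp hp).1
        simp [hM, hp0]
      rw [hsc] at h0
      have : M 0 q = 1 := by simp [hM]
      rw [this, mul_one] at h0
      rw [add_comm]; exact h0
      
    have hQx : ∀ p ∈ S, x (q : ℕ) - b (p : ℕ) ≠ 0 := by
      intro p hp
      obtain ⟨h1, h2⟩ := hmem p hp
      exact sub_ne_zero.mpr (Ne.symm (hbx _ _ h1 h2 (Nat.lt_succ_iff.mp q.isLt)))
    have hQeval : Q.eval (x (q : ℕ)) = ∏ p ∈ S, (x (q : ℕ) - b (p : ℕ)) := by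
      simp [hQ, eval_prod]
    have key : P.eval (x (q : ℕ)) =
        (v 0 + ∑ p ∈ S, v p * ((b (p : ℕ) - a) / (x (q : ℕ) - b (p : ℕ)))) *
          ∏ p ∈ S, (x (q : ℕ) - b (p : ℕ)) := by
      rw [hP]
      simp only [eval_add, eval_mul, eval_C, eval_finset_sum, eval_prod, eval_sub, eval_X,
        hQeval, add_mul, Finset.sum_mul]
      congr 1
      refine Finset.sum_congr rfl ?_
      intro p hp
      rw [← Finset.mul_prod_erase _ _ hp]
      have hne := hQx p hp
      field_simp
    rw [key, hrel, zero_mul]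
  -- P has degree < m + 1
  have hdegQ : Q.natDegree ≤ m := by
    rw [hQ, aux_natDegree_prod_X_sub_C, hScard]
  have hdegP : P.natDegree < m + 1 := by
    rw [hP]
    apply Nat.lt_succ_of_le
    apply le_trans (natDegree_add_le _ _)
    apply max_le
    · exact le_trans (natDegree_mul_le) (by simpa using hdegQ)
    · apply natDegree_sum_le_of_forall_le
      intro p hp
      apply le_trans (natDegree_mul_le)
      simp only [natDegree_C, zero_add]
      rw [aux_natDegree_prod_X_sub_C]
      calc (S.erase p).card ≤ S.card := Finset.card_erase_le
        _ = m := hScard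
  -- x is injective on Fin (m+1)
  have hxinj : Function.Injective (fun q : Fin (m + 1) => x (q : ℕ)) := by
    intro i j hij
    by_contra hne
    exact hx _ _ (Nat.lt_succ_iff.mp i.isLt) (Nat.lt_succ_iff.mp j.isLt)
      (fun h => hne (Fin.ext h)) hij
  have hP0 : P = 0 :=
    Polynomial.eq_zero_of_natDegree_lt_card_of_eval_eq_zero P hxinj heval
      (by simpa using hdegP)
  -- evaluate at b j for j ∈ S : get v j = 0
  have hvS : ∀ j ∈ S, v j = 0 := by
    intro j hj
    obtain ⟨hj1, hj2⟩ := hmem j hj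
    have h1 : P.eval (b (j : ℕ)) = 0 := by rw [hP0]; simp
    have hQj : Q.eval (b (j : ℕ)) = 0 := by
      rw [hQ, eval_prod]
      exact Finset.prod_eq_zero hj (by simp)
    have hsum : ∀ p ∈ S, p ≠ j →
        (C (v p * (b (p : ℕ) - a)) *
          ∏ p' ∈ S.erase p, (X - C (b (p' : ℕ)))).eval (b (j : ℕ)) = 0 := by
      intro p hp hpj
      rw [eval_mul, eval_prod]
      have : j ∈ S.erase p := Finset.mem_erase.mpr ⟨fun h => hpj h.symm, hj⟩
      rw [Finset.prod_eq_zero this (by simp), mul_zero]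
    have h2 : P.eval (b (j : ℕ)) =
        v j * (b (j : ℕ) - a) * ∏ p' ∈ S.erase j, (b (j : ℕ) - b (p' : ℕ)) := by
      rw [hP, eval_add, eval_mul, eval_C, hQj, mul_zero, zero_add, eval_finset_sum,
        Finset.sum_eq_single_of_mem j hj (fun p hp hpj => hsum p hp hpj)]
      simp [eval_prod]
    rw [h2] at h1
    have hba : b (j : ℕ) - a ≠ 0 := sub_ne_zero.mpr (Ne.symm (hab _ hj1 hj2))
    have hprod : ∏ p' ∈ S.erase j, (b (j : ℕ) - b (p' : ℕ)) ≠ 0 := by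
      apply Finset.prod_ne_zero_iff.mpr
      intro p' hp'
      have hp'S : p' ∈ S := Finset.mem_erase.mp hp' |>.2
      obtain ⟨h1', h2'⟩ := hmem p' hp'S
      apply sub_ne_zero.mpr
      apply hb _ _ hj1 hj2 h1' h2'
      intro h
      exact (Finset.mem_erase.mp hp').1 (Fin.ext h.symm)
    rcases mul_eq_zero.mp h1 with h | h
    · rcases mul_eq_zero.mp h with h' | h'
      · exact h'
      · exact absurd h' hba
    · exact absurd h hprod
  -- now v 0 = 0 too, by evaluating P at a
  have hv00 : v 0 = 0 := by
    have h1 : P.eval a = 0 := by rw [hP0]; simp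
    have hQa : Q.eval a ≠ 0 := by
      rw [hQ, eval_prod]
      apply Finset.prod_ne_zero_iff.mpr
      intro p hp
      obtain ⟨h1', h2'⟩ := hmem p hp
      simpa using sub_ne_zero.mpr (hab _ h1' h2')
    have h2 : P.eval a = v 0 * Q.eval a := by
      rw [hP, eval_add, eval_mul, eval_C, eval_finset_sum]
      rw [Finset.sum_eq_zero, add_zero]
      intro p hp
      rw [eval_mul, eval_C, hvS p hp, zero_mul, zero_mul]
    rw [h2] at h1
    exact (mul_eq_zero.mp h1).resolve_right hQa
  apply hv0
  funext p
  by_cases hp : p = 0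
  · rw [hp]; exact hv00
  · exact hvS p (Finset.mem_erase.mpr ⟨hp, Finset.mem_univ p⟩)
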